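/- Let u_f solve ρ(u'' − θu') = u − f on an interval ending at a_R with initial conditions u(a_R) = u⁰, u'(a_R) = u¹, where ρ > 0, θ, f ∈ ℝ. If u⁰ ≥ f and u¹ ≤ 0, then u'(a_L) ≤ 0 for every a_L < a_R, with equality u'(a_L) = 0 if and only if u⁰ = f and u¹ = 0. -/

import Mathlib

/-- Auxiliary: a function satisfying `p' = c p` is an exponential. -/
lemma ode_exp_aux (c : ℝ) (p : ℝ → ℝ) (hp : ∀ a, HasDerivAt p (c * p a) a)
    (a b : ℝ) : p a = p b * Real.exp (c * (a - b)) := by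
  have hg : ∀ x, HasDerivAt (fun x => p x * Real.exp (-c * x)) 0 x := by
    intro x
    have h1 := (hp x).fun_mul (((hasDerivAt_id x).const_mul (-c)).exp)
    refine h1.congr_deriv ?_
    ring
  have hconst : p a * Real.exp (-c * a) = p b * Real.exp (-c * b) :=
    is_const_of_deriv_eq_zero (fun x => (hg x).differentiableAt)
      (fun x => (hg x).deriv) a b
  have he : Real.exp (-c * a) ≠ 0 := Real.exp_ne_zero _
  have : p a = p b * Real.exp (-c * b) * Real.exp (c * a) := by
    have h2 := congrArg (fun y => y * Real.exp (c * a)) hconst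
    simpa [mul_assoc, ← Real.exp_add] using h2
  rw [this, mul_assoc, ← Real.exp_add]
  ring_nf

set_option maxHeartbeats 1000000 in
/-- Let `u` solve `ρ(u'' − θu') = u − f` with terminal data
`u(a_R) = u⁰ ≥ f` and `u'(a_R) = u¹ ≤ 0`. Then `u'(a_L) ≤ 0` for every
`a_L < a_R`, with `u'(a_L) = 0` if and only if `u⁰ = f` and `u¹ = 0`. -/
theorem ode_ranking_sign (ρ θ f u0 u1 aR : ℝ) (hρ : 0 < ρ)
    (u : ℝ → ℝ) (hu : ContDiff ℝ 2 u)
    (hODE : ∀ a : ℝ, ρ * (deriv (deriv u) a - θ * deriv u a) = u a - f)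
    (hval : u aR = u0) (hder : deriv u aR = u1)
    (h0 : f ≤ u0) (h1 : u1 ≤ 0) :
    ∀ aL : ℝ, aL < aR →
      deriv u aL ≤ 0 ∧ (deriv u aL = 0 ↔ (u0 = f ∧ u1 = 0)) := by
  intro aL haL
  -- differentiability
  have hd1 : Differentiable ℝ u := hu.differentiable two_ne_zero
  have hd2 : Differentiable ℝ (deriv u) := by
    have h2 : (2 : WithTop ℕ∞) = 1 + 1 := by norm_num
    have hu2 := hu
    rw [h2] at hu2
    exact ((contDiff_succ_iff_deriv.mp hu2).2.2).differentiable one_ne_zero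
  -- characteristic roots
  set s := Real.sqrt (ρ * θ * (ρ * θ) + 4 * ρ) with hs_def
  have hs0 : (0:ℝ) ≤ ρ * θ * (ρ * θ) + 4 * ρ := by nlinarith [sq_nonneg (ρ * θ)]
  have hs : s * s = ρ * θ * (ρ * θ) + 4 * ρ := Real.mul_self_sqrt hs0
  have hsnn : 0 ≤ s := Real.sqrt_nonneg _
  set L := (ρ * θ + s) / (2 * ρ) with hL_def
  set M := (ρ * θ - s) / (2 * ρ) with hM_def
  have hLpos : 0 < L := by
    apply div_pos ?_ (by positivity)
    nlinarith [hs, hsnn, hρ]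
  have hMneg : M < 0 := by
    apply div_neg_of_neg_of_pos ?_ (by positivity)
    nlinarith [hs, hsnn, hρ]
  have hsum : L + M = θ := by
    rw [hL_def, hM_def]; field_simp; ring
  have hprod : L * M = -(1 / ρ) := by
    rw [hL_def, hM_def]; field_simp; nlinarith [hs]
  have hODE' : ∀ a, deriv (deriv u) a = θ * deriv u a + (u a - f) / ρ := by
    intro a
    have h := hODE a
    field_simp
    linarith
  -- first-order factors
  have hpode : ∀ a, HasDerivAt (fun x => deriv u x - M * (u x - f))
      (L * (deriv u a - M * (u a - f))) a := by
    intro a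
    have h1 : HasDerivAt u (deriv u a) a := (hd1 a).hasDerivAt
    have h2 : HasDerivAt (deriv u) (deriv (deriv u) a) a := (hd2 a).hasDerivAt
    have h3 : HasDerivAt (fun x => deriv u x - M * (u x - f))
        (deriv (deriv u) a - M * deriv u a) a :=
      h2.sub ((h1.sub_const f).const_mul M)
    convert h3 using 1
    rw [hODE' a]
    linear_combination (deriv u a) * hsum - (u a - f) * hprod
  have hqode : ∀ a, HasDerivAt (fun x => deriv u x - L * (u x - f))
      (M * (deriv u a - L * (u a - f))) a := by
    intro a
    have h1 : HasDerivAt u (deriv u a) a := (hd1 a).hasDerivAt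
    have h2 : HasDerivAt (deriv u) (deriv (deriv u) a) a := (hd2 a).hasDerivAt
    have h3 : HasDerivAt (fun x => deriv u x - L * (u x - f))
        (deriv (deriv u) a - L * deriv u a) a :=
      h2.sub ((h1.sub_const f).const_mul L)
    convert h3 using 1
    rw [hODE' a]
    linear_combination (deriv u a) * hsum - (u a - f) * hprod
  have hp := ode_exp_aux L _ hpode aL aR
  have hq := ode_exp_aux M _ hqode aL aR
  simp only [hval, hder] at hp hq
  set Ep := Real.exp (L * (aL - aR)) with hEp_def
  set Em := Real.exp (M * (aL - aR)) with hEm_def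
  have hEp : 0 < Ep := Real.exp_pos _
  have hEm : 0 < Em := Real.exp_pos _
  have hEE : Ep < Em := by
    apply Real.exp_lt_exp.mpr
    have : aL - aR < 0 := by linarith
    exact mul_lt_mul_of_neg_right (hMneg.trans hLpos) this
  have hderL : (L - M) * deriv u aL
      = u1 * (L * Ep - M * Em) + L * M * (u0 - f) * (Em - Ep) := by
    linear_combination L * hp - M * hq
  have hA : 0 < L * Ep - M * Em := by nlinarith [mul_pos hLpos hEp, mul_pos (neg_pos.mpr hMneg) hEm]
  have hB : 0 < Em - Ep := sub_pos.mpr hEE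
  have hLMneg : L * M < 0 := mul_neg_of_pos_of_neg hLpos hMneg
  have t1 : u1 * (L * Ep - M * Em) ≤ 0 := mul_nonpos_of_nonpos_of_nonneg h1 hA.le
  have t2 : L * M * (u0 - f) * (Em - Ep) ≤ 0 := by
    nlinarith [mul_nonneg (sub_nonneg.2 h0) hB.le, hLMneg]
  have hLMsub : 0 < L - M := by linarith
  have hmain : (L - M) * deriv u aL ≤ 0 := by rw [hderL]; linarith
  have hd0 : deriv u aL ≤ 0 := by nlinarith [hmain, hLMsub]
  refine ⟨hd0, ?_, ?_⟩
  · intro h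
    have hz : u1 * (L * Ep - M * Em) + L * M * (u0 - f) * (Em - Ep) = 0 := by
      rw [h, mul_zero] at hderL; linarith
    have hw : u0 = f := by
      have hge : f ≤ u0 := h0
      have hle : u0 ≤ f := by
        nlinarith [hz, t1, mul_pos (mul_pos (neg_pos.mpr hLMneg) hB) hEp,
          mul_pos (neg_pos.mpr hLMneg) hB]
      linarith
    have hu1 : u1 = 0 := by
      have : u1 * (L * Ep - M * Em) = 0 := by rw [hw] at hz; linarith [hz]
      rcases mul_eq_zero.mp this with h' | h'
      · exact h'
      · exact absurd h' (ne_of_gt hA)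
    exact ⟨hw, hu1⟩
  · rintro ⟨he0, he1⟩
    have hz : (L - M) * deriv u aL = 0 := by
      rw [hderL, he0, he1]; ring
    rcases mul_eq_zero.mp hz with h' | h'
    · exact absurd h' (ne_of_gt hLMsub)
    · exact h'
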